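/- Let S be the zero-union of finite semigroups S₁, …, Sₙ with at least two of them non-commutative. Then the chromatic number of the commuting graph of S equals the sum of the chromatic numbers of the commuting graphs of the non-commutative Sᵢ. -/

import Mathlib

open SimpleGraph

/-- The center of a magma/semigroup: elements commuting with everything. -/
def sgCenter (S : Type*) [Mul S] : Set S := {x | ∀ y, x * y = y * x}

/-- The commuting graph of a semigroup: vertices are non-central elements,
distinct vertices adjacent iff they commute. -/
def commGraph (S : Type*) [Mul S] : SimpleGraph {x : S // x ∉ sgCenter S} where
  Adj x y := x ≠ y ∧ (x : S) * y = (y : S) * x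
  symm := ⟨fun x y ⟨h, h'⟩ => ⟨h.symm, h'.symm⟩⟩
  loopless := ⟨fun x ⟨h, _⟩ => h rfl⟩

/-- The extended commuting graph of a semigroup: vertices are all elements,
distinct vertices adjacent iff they commute. -/
def extCommGraph (S : Type*) [Mul S] : SimpleGraph S where
  Adj x y := x ≠ y ∧ x * y = y * x
  symm := ⟨fun x y ⟨h, h'⟩ => ⟨h.symm, h'.symm⟩⟩
  loopless := ⟨fun x ⟨h, _⟩ => h rfl⟩

/-- The graph join of two graphs on disjoint vertex sets. -/
def graphJoin {V W : Type*} (G : SimpleGraph V) (H : SimpleGraph W) :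
    SimpleGraph (V ⊕ W) where
  Adj x y := match x, y with
    | .inl a, .inl b => G.Adj a b
    | .inr a, .inr b => H.Adj a b
    | .inl _, .inr _ => True
    | .inr _, .inl _ => True
  symm := ⟨by rintro (a|a) (b|b) h <;> simp_all [SimpleGraph.Adj.symm]⟩
  loopless := ⟨by rintro (a|a) h; exacts [G.loopless.irrefl a h, H.loopless.irrefl a h]⟩

/-- The graph join of a family of graphs on disjoint vertex sets. -/
def graphJoinFam {ι : Type*} {V : ι → Type*} (G : ∀ i, SimpleGraph (V i)) :
    SimpleGraph (Σ i, V i) where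
  Adj x y := x.1 ≠ y.1 ∨ ∃ a b : V x.1, (G x.1).Adj a b ∧ x = ⟨x.1, a⟩ ∧ y = ⟨x.1, b⟩
  symm := ⟨by
    rintro ⟨i, a⟩ ⟨j, b⟩ (h | ⟨a', b', hadj, h1, h2⟩)
    · exact Or.inl h.symm
    · cases h1; cases h2
      exact Or.inr ⟨b', a, hadj.symm, rfl, rfl⟩⟩
  loopless := ⟨by
    rintro ⟨i, a⟩ (h | ⟨a', b', hadj, h1, h2⟩)
    · exact h rfl
    · cases h1
      cases h2
      exact (G i).loopless.irrefl _ hadj⟩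

/-- The strong product of two simple graphs. -/
def strongProd {V W : Type*} (G : SimpleGraph V) (H : SimpleGraph W) :
    SimpleGraph (V × W) where
  Adj x y := x ≠ y ∧ (x.1 = y.1 ∨ G.Adj x.1 y.1) ∧ (x.2 = y.2 ∨ H.Adj x.2 y.2)
  symm := ⟨fun x y ⟨h, h1, h2⟩ =>
    ⟨h.symm, h1.imp Eq.symm (fun h => G.symm.symm _ _ h), h2.imp Eq.symm (fun h => H.symm.symm _ _ h)⟩⟩
  loopless := ⟨fun x ⟨h, _⟩ => h rfl⟩

/-- The strong product of a family of simple graphs. -/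
def strongProdFam {ι : Type*} {V : ι → Type*} (G : ∀ i, SimpleGraph (V i)) :
    SimpleGraph (∀ i, V i) where
  Adj x y := x ≠ y ∧ ∀ i, x i = y i ∨ (G i).Adj (x i) (y i)
  symm := ⟨fun x y ⟨h, h'⟩ => ⟨h.symm, fun i => (h' i).imp Eq.symm (fun h => (G i).symm.symm _ _ h)⟩⟩
  loopless := ⟨fun x ⟨h, _⟩ => h rfl⟩

/-- `p` is a left path in the commuting graph of `S`. -/
def IsLeftPath {S : Type*} [Mul S] {u v : {x : S // x ∉ sgCenter S}}
    (p : (commGraph S).Walk u v) : Prop :=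
  p.IsPath ∧ u ≠ v ∧ ∀ w ∈ p.support, (u : S) * (w : S) = (v : S) * (w : S)

/-- The commuting graph of `S` contains a left path. -/
def HasLeftPath (S : Type*) [Mul S] : Prop :=
  ∃ (u v : {x : S // x ∉ sgCenter S}) (p : (commGraph S).Walk u v), IsLeftPath p

/-- The knit degree of `S`: the length of a shortest left path in its commuting graph. -/
noncomputable def knitDegree (S : Type*) [Mul S] : ℕ :=
  sInf {m | ∃ (u v : {x : S // x ∉ sgCenter S}) (p : (commGraph S).Walk u v),
    IsLeftPath p ∧ p.length = m}

/-- `p` is a *-left path in the extended commuting graph of `S`. -/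
def IsStarLeftPath {S : Type*} [Mul S] {u v : S}
    (p : (extCommGraph S).Walk u v) : Prop :=
  p.IsPath ∧ u ≠ v ∧ ∀ w ∈ p.support, u * w = v * w

/-- The extended commuting graph of `S` contains a *-left path. -/
def HasStarLeftPath (S : Type*) [Mul S] : Prop :=
  ∃ (u v : S) (p : (extCommGraph S).Walk u v), IsStarLeftPath p

/-- The *-knit degree of `S`. -/
noncomputable def starKnitDegree (S : Type*) [Mul S] : ℕ :=
  sInf {m | ∃ (u v : S) (p : (extCommGraph S).Walk u v), IsStarLeftPath p ∧ p.length = m}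

/-- The zero-union of a family of semigroups: their disjoint union plus a new zero. -/
def ZeroUnion {n : ℕ} (S : Fin n → Type*) : Type _ := Option (Σ i, S i)

instance {n : ℕ} (S : Fin n → Type*) [∀ i, Mul (S i)] : Mul (ZeroUnion S) where
  mul x y := match x, y with
    | some ⟨i, a⟩, some ⟨j, b⟩ =>
      if h : j = i then some ⟨i, a * (h ▸ b)⟩ else none
    | _, _ => none

section ZUAux

variable {n : ℕ} {S : Fin n → Type*} [∀ i, Semigroup (S i)]

/-- Helper constructor for nonzero elements of a zero-union. -/
def zuSome (i : Fin n) (a : S i) : ZeroUnion S := Option.some ⟨i, a⟩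

/-- The zero of a zero-union. -/
def zuNone : ZeroUnion S := Option.none

lemma zu_cases (x : ZeroUnion S) :
    x = (zuNone : ZeroUnion S) ∨ ∃ (i : Fin n) (a : S i), x = zuSome i a :=
  match x with
  | Option.none => Or.inl rfl
  | Option.some ⟨i, a⟩ => Or.inr ⟨i, a, rfl⟩

lemma zuSome_inj {i : Fin n} {a b : S i} (h : zuSome (S := S) i a = zuSome i b) :
    a = b := by
  have h' : (Option.some ⟨i, a⟩ : Option (Σ i, S i)) = Option.some ⟨i, b⟩ := h
  simpa using h'

lemma zuSome_fst_inj {i j : Fin n} {a : S i} {b : S j}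
    (h : zuSome (S := S) i a = zuSome j b) : i = j := by
  have h' : (Option.some ⟨i, a⟩ : Option (Σ i, S i)) = Option.some ⟨j, b⟩ := h
  simpa using (congrArg (fun o => Option.elim o i Sigma.fst) h')

lemma zu_mul_some_some (i j : Fin n) (a : S i) (b : S j) :
    (zuSome i a * zuSome j b : ZeroUnion S) =
      if h : j = i then zuSome i (a * (h ▸ b)) else zuNone := rfl

lemma zu_mul_same (i : Fin n) (a b : S i) :
    (zuSome i a * zuSome i b : ZeroUnion S) = zuSome i (a * b) := by
  rw [zu_mul_some_some, dif_pos rfl]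

lemma zu_mul_diff {i j : Fin n} (h : j ≠ i) (a : S i) (b : S j) :
    (zuSome i a * zuSome j b : ZeroUnion S) = zuNone := by
  rw [zu_mul_some_some, dif_neg h]

lemma zu_mul_none_left (x : ZeroUnion S) : (zuNone * x : ZeroUnion S) = zuNone := by
  rcases zu_cases x with h | ⟨i, a, h⟩ <;> subst h <;> rfl

lemma zu_mul_none_right (x : ZeroUnion S) : (x * zuNone : ZeroUnion S) = zuNone := by
  rcases zu_cases x with h | ⟨i, a, h⟩ <;> subst h <;> rfl

lemma zu_center_none : (zuNone : ZeroUnion S) ∈ sgCenter (ZeroUnion S) := by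
  intro y
  rw [zu_mul_none_left, zu_mul_none_right]

lemma zu_center_some (i : Fin n) (a : S i) :
    (zuSome i a : ZeroUnion S) ∈ sgCenter (ZeroUnion S) ↔ a ∈ sgCenter (S i) := by
  constructor
  · intro h b
    have h' := h (zuSome i b)
    rw [zu_mul_same, zu_mul_same] at h'
    exact zuSome_inj h'
  · intro h y
    rcases zu_cases y with hy | ⟨j, b, hy⟩ <;> subst hy
    · rw [zu_mul_none_left, zu_mul_none_right]
    · by_cases hj : j = i
      · subst hj
        rw [zu_mul_same, zu_mul_same, h b]
      · rw [zu_mul_diff hj, zu_mul_diff (fun h' => hj h'.symm)]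

/-- The canonical embedding of noncentral elements of `S i` into noncentral
elements of the zero-union. -/
def vzMk (i : Fin n) (a : {x : S i // x ∉ sgCenter (S i)}) :
    {x : ZeroUnion S // x ∉ sgCenter (ZeroUnion S)} :=
  ⟨zuSome i a.1, fun h => a.2 ((zu_center_some i a.1).mp h)⟩

lemma vz_cases (v : {x : ZeroUnion S // x ∉ sgCenter (ZeroUnion S)}) :
    ∃ (i : Fin n) (a : {x : S i // x ∉ sgCenter (S i)}), v = vzMk i a := by
  obtain ⟨x, hx⟩ := v
  rcases zu_cases x with h | ⟨i, a, h⟩ <;> subst h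
  · exact absurd zu_center_none hx
  · exact ⟨i, ⟨a, fun h => hx ((zu_center_some i a).mpr h)⟩, rfl⟩

lemma adj_vzMk_diff {i j : Fin n} (hij : i ≠ j)
    (a : {x : S i // x ∉ sgCenter (S i)}) (b : {x : S j // x ∉ sgCenter (S j)}) :
    (commGraph (ZeroUnion S)).Adj (vzMk i a) (vzMk j b) := by
  constructor
  · intro h
    exact hij (zuSome_fst_inj (congrArg Subtype.val h))
  · show (zuSome i a.1 * zuSome j b.1 : ZeroUnion S) =
      (zuSome j b.1 * zuSome i a.1 : ZeroUnion S)
    rw [zu_mul_diff (Ne.symm hij), zu_mul_diff hij]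

lemma adj_vzMk_same {i : Fin n}
    (a b : {x : S i // x ∉ sgCenter (S i)}) :
    (commGraph (ZeroUnion S)).Adj (vzMk i a) (vzMk i b) ↔
      (commGraph (S i)).Adj a b := by
  constructor
  · rintro ⟨hne, hmul⟩
    refine ⟨fun h => hne (by rw [h]), ?_⟩
    have h' : (zuSome i a.1 * zuSome i b.1 : ZeroUnion S) =
        (zuSome i b.1 * zuSome i a.1 : ZeroUnion S) := hmul
    rw [zu_mul_same, zu_mul_same] at h'
    exact zuSome_inj h'
  · rintro ⟨hne, hmul⟩
    refine ⟨?_, ?_⟩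
    · intro h
      exact hne (Subtype.ext (zuSome_inj (congrArg Subtype.val h)))
    · show (zuSome i a.1 * zuSome i b.1 : ZeroUnion S) =
        (zuSome i b.1 * zuSome i a.1 : ZeroUnion S)
      rw [zu_mul_same, zu_mul_same, hmul]

lemma sigma_color_ne {P : Fin n → Prop} {m : Fin n → ℕ}
    (C : ∀ i, (commGraph (S i)).Coloring (Fin (m i)))
    {i j : Fin n} (hi : P i) (hj : P j)
    (a : {x : S i // x ∉ sgCenter (S i)}) (b : {x : S j // x ∉ sgCenter (S j)})
    (hadj : (commGraph (ZeroUnion S)).Adj (vzMk i a) (vzMk j b)) :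
    (⟨⟨i, hi⟩, C i a⟩ : Σ k : Subtype P, Fin (m k.1)) ≠ ⟨⟨j, hj⟩, C j b⟩ := by
  by_cases h : i = j
  · subst h
    have hab : (commGraph (S i)).Adj a b := (adj_vzMk_same a b).mp hadj
    intro hEq
    have h2 : C i a = C i b := by simpa using hEq
    exact (C i).valid hab h2
  · intro hEq
    have h1 := congrArg Sigma.fst hEq
    exact h (congrArg Subtype.val h1)

end ZUAux

theorem chromaticNumber_commGraph_zeroUnion {n : ℕ} (S : Fin n → Type*)
    [∀ i, Semigroup (S i)] [∀ i, Fintype (S i)] [∀ i, Nonempty (S i)]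
    (NC : Finset (Fin n)) (hNC : ∀ i, i ∈ NC ↔ ¬ ∀ x y : S i, x * y = y * x)
    (h2 : 2 ≤ NC.card) :
    (commGraph (ZeroUnion S)).chromaticNumber =
      ∑ i ∈ NC, (commGraph (S i)).chromaticNumber := by
  classical
  haveI fV : ∀ i, Fintype {x : S i // x ∉ sgCenter (S i)} := fun i => Fintype.ofFinite _
  haveI : Finite (ZeroUnion S) := by
    have h : Finite (Option (Σ i, S i)) := inferInstance
    exact h
  haveI : Finite {x : ZeroUnion S // x ∉ sgCenter (ZeroUnion S)} := Subtype.finite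
  haveI : Fintype {x : ZeroUnion S // x ∉ sgCenter (ZeroUnion S)} := Fintype.ofFinite _
  set c : Fin n → ℕ := fun i => ((commGraph (S i)).chromaticNumber).toNat with hc
  have hcol : ∀ i, (commGraph (S i)).Colorable (c i) := fun i =>
    (commGraph (S i)).colorable_chromaticNumber_of_fintype
  have hchi : ∀ i, (commGraph (S i)).chromaticNumber = (c i : ℕ∞) := fun i => by
    have hne : (commGraph (S i)).chromaticNumber ≠ ⊤ :=
      chromaticNumber_ne_top_iff_exists.mpr ⟨_, hcol i⟩
    exact (ENat.coe_toNat hne).symm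
  have hrhs : ∑ i ∈ NC, (commGraph (S i)).chromaticNumber =
      ((∑ i ∈ NC, c i : ℕ) : ℕ∞) := by
    rw [Nat.cast_sum]
    exact Finset.sum_congr rfl fun i _ => hchi i
  rw [hrhs]
  have memNC : ∀ (i : Fin n), {x : S i // x ∉ sgCenter (S i)} → i ∈ NC := by
    intro i a
    exact (hNC i).mpr fun H => a.2 fun b => H a.1 b
  refine le_antisymm ?_ ?_
  · -- upper bound
    rw [chromaticNumber_le_iff_colorable]
    set C : ∀ i, (commGraph (S i)).Coloring (Fin (c i)) := fun i => (hcol i).some with hC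
    choose idx elt hvz using vz_cases (S := S)
    let col : (commGraph (ZeroUnion S)).Coloring (Σ k : {i // i ∈ NC}, Fin (c k.1)) :=
      SimpleGraph.Coloring.mk
        (fun v => ⟨⟨idx v, memNC _ (elt v)⟩, C (idx v) (elt v)⟩)
        (by
          intro v w hadj
          rw [hvz v, hvz w] at hadj
          exact sigma_color_ne C _ _ _ _ hadj)
    have hcard : Fintype.card (Σ k : {i // i ∈ NC}, Fin (c k.1)) = ∑ i ∈ NC, c i := by
      rw [Fintype.card_sigma]
      simp only [Fintype.card_fin]
      exact Finset.sum_coe_sort NC c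
    exact hcard ▸ col.colorable
  · -- lower bound
    set N : ℕ := ((commGraph (ZeroUnion S)).chromaticNumber).toNat with hN
    have hNcol : (commGraph (ZeroUnion S)).Colorable N :=
      (commGraph (ZeroUnion S)).colorable_chromaticNumber_of_fintype
    have hZ : (commGraph (ZeroUnion S)).chromaticNumber = (N : ℕ∞) := by
      have hne : (commGraph (ZeroUnion S)).chromaticNumber ≠ ⊤ :=
        chromaticNumber_ne_top_iff_exists.mpr ⟨_, hNcol⟩
      exact (ENat.coe_toNat hne).symm
    rw [hZ, Nat.cast_le]
    obtain ⟨C⟩ := hNcol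
    set A : Fin n → Finset (Fin N) :=
      fun i => Finset.image (fun a => C (vzMk i a)) Finset.univ with hA
    have hAi : ∀ i, c i ≤ (A i).card := by
      intro i
      let col : (commGraph (S i)).Coloring ↥(A i) :=
        SimpleGraph.Coloring.mk
          (fun a => ⟨C (vzMk i a), Finset.mem_image_of_mem _ (Finset.mem_univ a)⟩)
          (by
            intro a b hab h
            exact C.valid ((adj_vzMk_same a b).mpr hab) (congrArg Subtype.val h))
      have hc2 : (commGraph (S i)).Colorable (Fintype.card ↥(A i)) := col.colorable
      rw [Fintype.card_coe] at hc2
      have hle := hc2.chromaticNumber_le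
      rw [hchi i, Nat.cast_le] at hle
      exact hle
    have hdisj : ∀ i ∈ NC, ∀ j ∈ NC, i ≠ j → Disjoint (A i) (A j) := by
      intro i _ j _ hij
      rw [Finset.disjoint_left]
      intro x hxi hxj
      obtain ⟨a, -, ha⟩ := Finset.mem_image.mp hxi
      obtain ⟨b, -, hb⟩ := Finset.mem_image.mp hxj
      exact C.valid (adj_vzMk_diff hij a b) (ha.trans hb.symm)
    calc ∑ i ∈ NC, c i ≤ ∑ i ∈ NC, (A i).card :=
          Finset.sum_le_sum fun i _ => hAi i
      _ = (NC.biUnion A).card := (Finset.card_biUnion hdisj).symm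
      _ ≤ Fintype.card (Fin N) := Finset.card_le_univ _
      _ = N := Fintype.card_fin N
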